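/- Let S be a dense subsemigroup of ((0,∞),+) and let E₁, E₂ ⊆ S². If E₁ ∪ E₂ is a J-set near zero in S², then E₁ is a J-set near zero in S² or E₂ is a J-set near zero in S² (i.e., the property of being a J-set near zero is partition regular). -/
import Mathlib


open Filter Set

/-- `E ⊆ Sᵛ` is a J-set near zero: for every finite family of sequences in `Sᵛ` converging to
zero and every `δ > 0`, there are `a ∈ (S ∩ (0,δ))ᵛ` and a finite nonempty `H ⊆ ℕ` with
`a + ∑_{t∈H} f(t) ∈ E` for every `f` in the family (finite sums computed in `ℝ` via the
embedding `S ↪ ℝ`). -/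
def JSetNearZeroS (S : AddSubsemigroup ℝ) (v : ℕ) (E : Set (Fin v → S)) : Prop :=
  ∀ F : Finset (ℕ → Fin v → S),
    (∀ f ∈ F, ∀ i : Fin v, Tendsto (fun n => ((f n i : ℝ))) atTop (nhds 0)) →
    ∀ δ : ℝ, 0 < δ →
      ∃ a : Fin v → S, (∀ i, 0 < (a i : ℝ) ∧ (a i : ℝ) < δ) ∧
        ∃ H : Finset ℕ, H.Nonempty ∧
          ∀ f ∈ F, ∃ e ∈ E, ∀ i, (e i : ℝ) = (a i : ℝ) + ∑ t ∈ H, ((f t i : ℝ))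

private lemma add_sum_memS (S : AddSubsemigroup ℝ) {ι : Type*} (T : Finset ι) (g : ι → ℝ) :
    ∀ x ∈ S, (∀ p ∈ T, g p ∈ S) → x + ∑ p ∈ T, g p ∈ S := by
  classical
  induction T using Finset.induction_on with
  | empty => intro x hx _; simpa using hx
  | @insert b T' hb ih =>
    intro x hx hg
    rw [Finset.sum_insert hb, add_left_comm]
    exact S.add_mem (hg b (Finset.mem_insert_self b T'))
      (ih x hx fun p hp => hg p (Finset.mem_insert_of_mem hp))

private lemma sum_memS (S : AddSubsemigroup ℝ) {ι : Type*} (T : Finset ι) (hT : T.Nonempty)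
    (g : ι → ℝ) (hg : ∀ p ∈ T, g p ∈ S) : ∑ p ∈ T, g p ∈ S := by
  classical
  obtain ⟨b, hb⟩ := hT
  rw [← Finset.add_sum_erase T g hb]
  exact add_sum_memS S _ _ _ (hg b hb) fun p hp => hg p (Finset.mem_of_mem_erase hp)

/-- being a J-set near zero in `S²` is partition regular. -/
theorem jSetNearZero_partition_regular (S : AddSubsemigroup ℝ)
    (hpos : ∀ x ∈ S, (0:ℝ) < x)
    (hdense : ∀ a b : ℝ, 0 < a → a < b → ∃ s ∈ S, a < s ∧ s < b)
    (E₁ E₂ : Set (Fin 2 → S)) (h : JSetNearZeroS S 2 (E₁ ∪ E₂)) :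
    JSetNearZeroS S 2 E₁ ∨ JSetNearZeroS S 2 E₂ := by
  classical
  by_cases h2 : JSetNearZeroS S 2 E₂
  · exact Or.inr h2
  left
  rw [JSetNearZeroS] at h2
  push_neg at h2
  obtain ⟨F₀, hF₀t, δ₀, hδ₀, hbad⟩ := h2
  intro F hFt δ hδ
  set F' : Finset (ℕ → Fin 2 → S) := F ∪ F₀ with hF'def
  have hF't : ∀ f ∈ F', ∀ i : Fin 2, Tendsto (fun n => ((f n i : ℝ))) atTop (nhds 0) := by
    intro f hf
    rcases Finset.mem_union.1 hf with hf | hf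
    exacts [hFt f hf, hF₀t f hf]
  set δ' : ℝ := min δ δ₀ with hδ'def
  have hδ' : (0:ℝ) < δ' := lt_min hδ hδ₀
  -- Hales–Jewett
  obtain ⟨ι, hιfin, hHJ⟩ :=
    Combinatorics.Line.exists_mono_in_high_dimension {f // f ∈ F'} Bool
  haveI := hιfin
  rcases isEmpty_or_nonempty ι with hι | hι
  · obtain ⟨l, -⟩ := hHJ fun _ => true
    obtain ⟨i, -⟩ := l.proper
    exact (hι.false i).elim
  set N : ℕ := Fintype.card ι with hNdef
  have hN1 : 1 ≤ N := Fintype.card_pos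
  set eι : ι ≃ Fin N := Fintype.equivFin ι with heι
  set enc : ℕ → ι → ℕ := fun t j => t * N + (eι j : ℕ) with henc
  have henc_inj : ∀ t₁ j₁ t₂ j₂, enc t₁ j₁ = enc t₂ j₂ → t₁ = t₂ ∧ j₁ = j₂ := by
    intro t₁ j₁ t₂ j₂ hEq
    have hlt₁ : ((eι j₁ : ℕ)) < N := (eι j₁).2
    have hlt₂ : ((eι j₂ : ℕ)) < N := (eι j₂).2
    simp only [enc] at hEq
    have ht : t₁ = t₂ := by
      rcases Nat.lt_trichotomy t₁ t₂ with hlt | he | hgt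
      · exfalso
        have h1 : (t₁ + 1) * N ≤ t₂ * N := Nat.mul_le_mul_right N (Nat.succ_le_of_lt hlt)
        have h2 : t₁ * N + N = (t₁ + 1) * N := by ring
        omega
      · exact he
      · exfalso
        have h1 : (t₂ + 1) * N ≤ t₁ * N := Nat.mul_le_mul_right N (Nat.succ_le_of_lt hgt)
        have h2 : t₂ * N + N = (t₂ + 1) * N := by ring
        omega
    subst ht
    have : ((eι j₁ : ℕ)) = ((eι j₂ : ℕ)) := by omega
    exact ⟨rfl, eι.injective (Fin.ext this)⟩
  have henc_ge : ∀ t (j : ι), t ≤ enc t j := by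
    intro t j
    have : t * 1 ≤ t * N := Nat.mul_le_mul_left t hN1
    simp only [enc]; omega
  set εf : ℕ → ℝ := fun s => δ' * (1/2)^(s+2) with hεf
  have hεpos : ∀ s, 0 < εf s := by intro s; positivity
  have hεeq : ∀ s, εf s = δ'/4 * (1/2)^s := by
    intro s; simp only [εf, pow_add]; ring
  -- choose a strictly increasing sequence of indices where all sequences are small
  have hev : ∀ s : ℕ, ∀ᶠ k in atTop, ∀ f ∈ F', ∀ i : Fin 2, ((f k i : ℝ)) < εf s := by
    intro s
    rw [Filter.eventually_all_finset]
    intro f hf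
    rw [eventually_all]
    intro i
    exact (hF't f hf i).eventually_lt_const (hεpos s)
  obtain ⟨ψ, hψmono, hψ⟩ := Filter.extraction_forall_of_eventually hev
  -- the sequences fed to the J-set property of the union
  have hsum_mem : ∀ (w : ι → {f // f ∈ F'}) (t : ℕ) (i : Fin 2),
      ∑ j : ι, (((w j).1 (ψ (enc t j)) i : ℝ)) ∈ S := by
    intro w t i
    exact sum_memS S _ Finset.univ_nonempty _ fun j _ => ((w j).1 (ψ (enc t j)) i).2
  set gfun : (ι → {f // f ∈ F'}) → ℕ → Fin 2 → S :=
    fun w t i => ⟨∑ j : ι, (((w j).1 (ψ (enc t j)) i : ℝ)), hsum_mem w t i⟩ with hgfun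
  have hterm_small : ∀ (w : ι → {f // f ∈ F'}) (t : ℕ) (i : Fin 2) (j : ι),
      (((w j).1 (ψ (enc t j)) i : ℝ)) < εf (enc t j) :=
    fun w t i j => hψ (enc t j) (w j).1 (w j).2 i
  have hεle : ∀ (t : ℕ) (j : ι), εf (enc t j) ≤ δ'/4 * (1/2)^t := by
    intro t j
    rw [hεeq]
    have h2 : ((1:ℝ)/2)^(enc t j) ≤ (1/2)^t :=
      pow_le_pow_of_le_one (by norm_num) (by norm_num) (henc_ge t j)
    have : (0:ℝ) ≤ δ'/4 := by positivity
    exact mul_le_mul_of_nonneg_left h2 this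
  set G : Finset (ℕ → Fin 2 → S) := Finset.image gfun Finset.univ with hG
  have hGt : ∀ g ∈ G, ∀ i : Fin 2, Tendsto (fun n => ((g n i : ℝ))) atTop (nhds 0) := by
    intro g hg i
    obtain ⟨w, -, rfl⟩ := Finset.mem_image.1 hg
    have hub : ∀ t, ((gfun w t i : ℝ)) ≤ (N * (δ'/4)) * (1/2)^t := by
      intro t
      show ∑ j : ι, (((w j).1 (ψ (enc t j)) i : ℝ)) ≤ _
      calc ∑ j : ι, (((w j).1 (ψ (enc t j)) i : ℝ))
          ≤ ∑ _j : ι, δ'/4 * (1/2)^t :=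
            Finset.sum_le_sum fun j _ => ((hterm_small w t i j).le.trans (hεle t j))
        _ = (N * (δ'/4)) * (1/2)^t := by
            rw [Finset.sum_const, Finset.card_univ, nsmul_eq_mul]; ring
    have hlb : ∀ t, (0:ℝ) ≤ ((gfun w t i : ℝ)) := fun t => (hpos _ (gfun w t i).2).le
    have hup : Tendsto (fun t : ℕ => (N * (δ'/4)) * (1/2:ℝ)^t) atTop (nhds 0) := by
      simpa using
        (tendsto_pow_atTop_nhds_zero_of_lt_one (by norm_num : (0:ℝ) ≤ 1/2)
          (by norm_num)).const_mul ((N:ℝ) * (δ'/4))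
    exact tendsto_of_tendsto_of_tendsto_of_le_of_le tendsto_const_nhds hup hlb hub
  obtain ⟨a, ha, H, hHne, hmem⟩ := h G hGt (δ'/2) (by positivity)
  -- the coloring
  set C : (ι → {f // f ∈ F'}) → Bool := fun w =>
    decide (∃ e ∈ E₁, ∀ i, (e i : ℝ) = (a i : ℝ) + ∑ t ∈ H, ((gfun w t i : ℝ))) with hC
  obtain ⟨l, hl⟩ := hHJ C
  obtain ⟨c, hc⟩ := hl
  set V : Finset ι := Finset.univ.filter (fun j => l.idxFun j = none) with hV
  set Jc : Finset ι := Finset.univ.filter (fun j => ¬ l.idxFun j = none) with hJc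
  set dflt : ℕ → Fin 2 → S := fun _ _ => a 0 with hdflt
  set cf : ι → ℕ → Fin 2 → S := fun j => ((l.idxFun j).map Subtype.val).getD dflt with hcf
  have hcfF' : ∀ j ∈ Jc, cf j ∈ F' := by
    intro j hj
    have hne : l.idxFun j ≠ none := by simpa [Jc] using (Finset.mem_filter.1 hj).2
    obtain ⟨u, hu⟩ := Option.ne_none_iff_exists'.1 hne
    simp [cf, hu, u.2]
  set H'' : Finset ℕ := (H ×ˢ V).image (fun p => ψ (enc p.1 p.2)) with hH''
  have hinjHV : ∀ (s : Finset (ℕ × ι)), ∀ p ∈ s, ∀ q ∈ s,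
      ψ (enc p.1 p.2) = ψ (enc q.1 q.2) → p = q := by
    intro s p _ q _ hpq
    have := hψmono.injective hpq
    obtain ⟨h1, h2⟩ := henc_inj _ _ _ _ this
    exact Prod.ext h1 h2
  have hH''ne : H''.Nonempty := by
    obtain ⟨j₀, hj₀⟩ := l.proper
    obtain ⟨t₀, ht₀⟩ := hHne
    exact ⟨ψ (enc t₀ j₀), Finset.mem_image.2 ⟨(t₀, j₀),
      Finset.mem_product.2 ⟨ht₀, Finset.mem_filter.2 ⟨Finset.mem_univ _, hj₀⟩⟩, rfl⟩⟩
  -- the new base point a'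
  set creal : Fin 2 → ℝ := fun i => ∑ p ∈ H ×ˢ Jc, ((cf p.2 (ψ (enc p.1 p.2)) i : ℝ)) with hcreal
  have hcnonneg : ∀ i, 0 ≤ creal i :=
    fun i => Finset.sum_nonneg fun p _ => (hpos _ (cf p.2 (ψ (enc p.1 p.2)) i).2).le
  have hcsmall : ∀ i, creal i ≤ δ'/2 := by
    intro i
    have h1 : creal i ≤ ∑ p ∈ H ×ˢ Jc, εf (enc p.1 p.2) :=
      Finset.sum_le_sum fun p hp => (hψ (enc p.1 p.2) (cf p.2) (hcfF' p.2
        (Finset.mem_product.1 hp).2) i).le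
    set T : Finset ℕ := (H ×ˢ Jc).image (fun p => enc p.1 p.2) with hT
    have h2 : ∑ p ∈ H ×ˢ Jc, εf (enc p.1 p.2) = ∑ s ∈ T, εf s := by
      rw [hT, Finset.sum_image]
      intro p hp q hq hpq
      have := henc_inj _ _ _ _ hpq
      exact Prod.ext this.1 this.2
    set M : ℕ := T.sup id + 1 with hM
    have h3 : T ⊆ Finset.range M := by
      intro s hs
      exact Finset.mem_range.2 (Nat.lt_succ_of_le (Finset.le_sup (f := id) hs))
    have h4 : ∑ s ∈ T, εf s ≤ ∑ s ∈ Finset.range M, εf s :=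
      Finset.sum_le_sum_of_subset_of_nonneg h3 fun s _ _ => (hεpos s).le
    have h5 : ∑ s ∈ Finset.range M, εf s ≤ δ'/2 := by
      have : ∑ s ∈ Finset.range M, εf s = δ'/4 * ∑ s ∈ Finset.range M, ((1:ℝ)/2)^s := by
        rw [Finset.mul_sum]
        exact Finset.sum_congr rfl fun s _ => hεeq s
      rw [this]
      have := sum_geometric_two_le M
      nlinarith
    linarith
  have hamem : ∀ i : Fin 2, (a i : ℝ) + creal i ∈ S := by
    intro i
    exact add_sum_memS S _ _ _ (a i).2 fun p _ => (cf p.2 (ψ (enc p.1 p.2)) i).2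
  set a' : Fin 2 → S := fun i => ⟨(a i : ℝ) + creal i, hamem i⟩ with ha'
  have ha'pos : ∀ i, 0 < ((a' i : ℝ)) := by
    intro i
    have := (ha i).1
    have := hcnonneg i
    show (0:ℝ) < (a i : ℝ) + creal i
    linarith
  have ha'small : ∀ i, ((a' i : ℝ)) < δ' := by
    intro i
    have := (ha i).2
    have := hcsmall i
    show (a i : ℝ) + creal i < δ'
    linarith
  -- the key computation
  have hkey : ∀ (x : {f // f ∈ F'}) (i : Fin 2),
      (a i : ℝ) + ∑ t ∈ H, ((gfun (l x) t i : ℝ))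
        = ((a' i : ℝ)) + ∑ s ∈ H'', ((x.1 s i : ℝ)) := by
    intro x i
    have hper : ∀ t ∈ H, ((gfun (l x) t i : ℝ))
        = (∑ j ∈ Jc, ((cf j (ψ (enc t j)) i : ℝ)))
          + ∑ j ∈ V, ((x.1 (ψ (enc t j)) i : ℝ)) := by
      intro t _
      show (∑ j : ι, (((l x j).1 (ψ (enc t j)) i : ℝ))) = _
      rw [← Finset.sum_filter_add_sum_filter_not Finset.univ (fun j => l.idxFun j = none)]
      rw [add_comm]
      congr 1
      · apply Finset.sum_congr rfl
        intro j hj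
        have hne : l.idxFun j ≠ none := by
          simpa using (Finset.mem_filter.1 hj).2
        obtain ⟨u, hu⟩ := Option.ne_none_iff_exists'.1 hne
        have h1 : l x j = u := by simp [Combinatorics.Line.coe_apply, hu]
        have h2 : cf j = u.1 := by simp [cf, hu]
        rw [h1, h2]
      · apply Finset.sum_congr rfl
        intro j hj
        have hno : l.idxFun j = none := by simpa using (Finset.mem_filter.1 hj).2
        have h1 : l x j = x := by simp [Combinatorics.Line.coe_apply, hno]
        rw [h1]
    rw [Finset.sum_congr rfl hper, Finset.sum_add_distrib]
    have hA : ∑ t ∈ H, ∑ j ∈ Jc, ((cf j (ψ (enc t j)) i : ℝ)) = creal i := by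
      show _ = ∑ p ∈ H ×ˢ Jc, ((cf p.2 (ψ (enc p.1 p.2)) i : ℝ))
      exact (Finset.sum_product H Jc (fun p : ℕ × ι => ((cf p.2 (ψ (enc p.1 p.2)) i : ℝ)))).symm
    have hB : ∑ t ∈ H, ∑ j ∈ V, ((x.1 (ψ (enc t j)) i : ℝ))
        = ∑ s ∈ H'', ((x.1 s i : ℝ)) := by
      show _ = ∑ s ∈ (H ×ˢ V).image (fun p => ψ (enc p.1 p.2)), ((x.1 s i : ℝ))
      rw [Finset.sum_image (hinjHV (H ×ˢ V))]
      exact (Finset.sum_product H V (fun p : ℕ × ι => ((x.1 (ψ (enc p.1 p.2)) i : ℝ)))).symm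
    rw [hA, hB]
    show (a i : ℝ) + (creal i + _) = ((a i : ℝ) + creal i) + _
    ring
  -- split on the color
  cases c with
  | false =>
    exfalso
    obtain ⟨f, hfF₀, hbadf⟩ := hbad a'
      (fun i => ⟨ha'pos i, (ha'small i).trans_le (min_le_right δ δ₀)⟩) H'' hH''ne
    set x : {f // f ∈ F'} := ⟨f, Finset.mem_union_right F hfF₀⟩ with hx
    obtain ⟨e, heE, heq⟩ := hmem (gfun (l x))
      (Finset.mem_image_of_mem gfun (Finset.mem_univ (l x)))
    have heE₂ : e ∈ E₂ := by
      rcases heE with he₁ | he₂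
      · exfalso
        have : C (l x) = true := by
          rw [hC, decide_eq_true_eq]
          exact ⟨e, he₁, heq⟩
        rw [hc x] at this
        exact Bool.false_ne_true this
      · exact he₂
    obtain ⟨i, hi⟩ := hbadf e heE₂
    exact hi ((heq i).trans (hkey x i))
  | true =>
    refine ⟨a', fun i => ⟨ha'pos i, (ha'small i).trans_le (min_le_left δ δ₀)⟩,
      H'', hH''ne, ?_⟩
    intro f hfF
    set x : {f // f ∈ F'} := ⟨f, Finset.mem_union_left F₀ hfF⟩ with hx
    have hcx : C (l x) = true := hc x
    rw [hC, decide_eq_true_eq] at hcx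
    obtain ⟨e, he₁, heq⟩ := hcx
    exact ⟨e, he₁, fun i => (heq i).trans (hkey x i)⟩
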